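/- Let S be a ring with Jacobson radical J(S), let P be a finitely generated projective right S-module and Q any projective right S-module. If Q/QJ(S) ≅ X ⊕ P/PJ(S) for some S/J(S)-module X, then there exists a projective right S-module Q' with Q'/Q'J(S) ≅ X and Q ≅ Q' ⊕ P. -/

import Mathlib

universe u

/-- The submodule `J(S)·M` of an `S`-module `M`, where `J(S)` is the Jacobson radical. -/
def jacSmul (S : Type u) [Ring S] (M : Type u) [AddCommGroup M] [Module S M] :
    Submodule S M :=
  Submodule.span S {x : M | ∃ j ∈ (⊥ : Ideal S).jacobson, ∃ m : M, x = j • m}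

section helpers

variable {S : Type u} [Ring S] {M N : Type u} [AddCommGroup M] [Module S M]
  [AddCommGroup N] [Module S N]

lemma jac_mul_mem {j : S} (hj : j ∈ (⊥ : Ideal S).jacobson) (s : S) :
    j * s ∈ (⊥ : Ideal S).jacobson :=
  Ideal.mul_mem_right s _ hj

lemma mem_jacSmul {j : S} (hj : j ∈ (⊥ : Ideal S).jacobson) (m : M) :
    j • m ∈ jacSmul S M :=
  Submodule.subset_span ⟨j, hj, m, rfl⟩

lemma jacSmul_map_le (f : M →ₗ[S] N) : (jacSmul S M).map f ≤ jacSmul S N := by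
  rw [jacSmul, Submodule.map_span, Submodule.span_le]
  rintro - ⟨x, ⟨j, hj, m, rfl⟩, rfl⟩
  rw [map_smul]
  exact mem_jacSmul hj _

lemma jacSmul_le_map (f : M →ₗ[S] N) (hf : Function.Surjective f) :
    jacSmul S N ≤ (jacSmul S M).map f := by
  rw [jacSmul, Submodule.span_le]
  rintro - ⟨j, hj, n, rfl⟩
  obtain ⟨m, rfl⟩ := hf n
  exact ⟨j • m, mem_jacSmul hj m, map_smul f j m⟩

/-- `J(S)·N` for a submodule `N`. -/
def jsub (N : Submodule S M) : Submodule S M :=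
  Submodule.span S {x : M | ∃ j ∈ (⊥ : Ideal S).jacobson, ∃ m ∈ N, x = j • m}

lemma jacSmul_eq_jsub_top : jacSmul S M = jsub (⊤ : Submodule S M) := by
  unfold jacSmul jsub
  congr 1
  ext x
  simp [Submodule.mem_top]

lemma jsub_rep (t : Finset M) {m : M} (hm : m ∈ jsub (Submodule.span S (↑t : Set M))) :
    ∃ a : M → S, (∀ x, a x ∈ (⊥ : Ideal S).jacobson) ∧ m = ∑ x ∈ t, a x • x := by
  let T : Submodule S M :=
    { carrier := {m | ∃ a : M → S, (∀ x, a x ∈ (⊥ : Ideal S).jacobson) ∧ m = ∑ x ∈ t, a x • x}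
      zero_mem' := ⟨0, fun x => Submodule.zero_mem _, by simp⟩
      add_mem' := by
        rintro x y ⟨a, ha, rfl⟩ ⟨b, hb, rfl⟩
        exact ⟨a + b, fun x => Submodule.add_mem _ (ha x) (hb x), by
          rw [← Finset.sum_add_distrib]; simp [add_smul]⟩
      smul_mem' := by
        rintro s x ⟨a, ha, rfl⟩
        exact ⟨fun x => s * a x, fun x => Ideal.mul_mem_left _ s (ha x), by
          rw [Finset.smul_sum]; simp [mul_smul]⟩ }
  suffices h : jsub (Submodule.span S (↑t : Set M)) ≤ T from h hm
  rw [jsub, Submodule.span_le]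
  rintro - ⟨j, hj, n, hn, rfl⟩
  obtain ⟨c, -, rfl⟩ := Submodule.mem_span_finset.mp hn
  refine ⟨fun x => j * c x, fun x => jac_mul_mem hj _, ?_⟩
  rw [Finset.smul_sum]
  simp [mul_smul]

lemma nak_core (t : Finset M)
    (h : Submodule.span S (↑t : Set M) ≤ jsub (Submodule.span S (↑t : Set M))) :
    Submodule.span S (↑t : Set M) = ⊥ := by
  classical
  induction t using Finset.induction_on with
  | empty => simp
  | insert _ _ ha ih =>
    rename_i a s
    have hmem : a ∈ jsub (Submodule.span S (↑(insert a s) : Set M)) :=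
      h (Submodule.subset_span (by simp))
    obtain ⟨c, hc, hrep⟩ := jsub_rep _ hmem
    rw [Finset.sum_insert ha] at hrep
    have h1 : (1 - c a) • a = ∑ x ∈ s, c x • x := by
      rw [sub_smul, one_smul, sub_eq_iff_eq_add']
      exact hrep
    obtain ⟨z, hz⟩ := Ideal.mem_jacobson_iff.mp (hc a) (-1)
    rw [Ideal.mem_bot, sub_eq_zero] at hz
    have hz1 : z * (1 - c a) = 1 := by
      have e : z * (1 - c a) = z * -1 * c a + z := by noncomm_ring
      rw [e, hz]
    have haspan : a ∈ Submodule.span S (↑s : Set M) := by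
      have : (z * (1 - c a)) • a ∈ Submodule.span S (↑s : Set M) := by
        rw [mul_smul, h1]
        exact Submodule.smul_mem _ _ (Submodule.sum_smul_mem _ _ fun x hx =>
          Submodule.subset_span hx)
      rwa [hz1, one_smul] at this
    have hins : Submodule.span S (↑(insert a s) : Set M) = Submodule.span S (↑s : Set M) := by
      rw [Finset.coe_insert, Submodule.span_insert_eq_span haspan]
    rw [hins] at h
    exact hins ▸ ih h

lemma nak_top [Module.Finite S M] (h : jacSmul S M = ⊤) : ∀ m : M, m = 0 := by
  obtain ⟨t, ht⟩ := Module.Finite.fg_top (R := S) (M := M)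
  have : Submodule.span S (↑t : Set M) = ⊥ := by
    apply nak_core
    rw [ht, ← jacSmul_eq_jsub_top, h]
  intro m
  have : m ∈ (⊥ : Submodule S M) := by rw [← this, ht]; trivial
  simpa using this

lemma nakayama [Module.Finite S M] (N : Submodule S M) (h : N ⊔ jacSmul S M = ⊤) : N = ⊤ := by
  have hfin : Module.Finite S (M ⧸ N) := Module.Finite.of_surjective N.mkQ N.mkQ_surjective
  have hmap : Submodule.map N.mkQ (jacSmul S M) = jacSmul S (M ⧸ N) :=
    le_antisymm (jacSmul_map_le _) (jacSmul_le_map _ N.mkQ_surjective)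
  have htop : jacSmul S (M ⧸ N) = ⊤ := by
    rw [← hmap, eq_top_iff]
    calc (⊤ : Submodule S (M ⧸ N)) = Submodule.map N.mkQ ⊤ := by
          rw [Submodule.map_top, Submodule.range_mkQ]
      _ = Submodule.map N.mkQ (N ⊔ jacSmul S M) := by rw [h]
      _ = Submodule.map N.mkQ N ⊔ Submodule.map N.mkQ (jacSmul S M) := Submodule.map_sup _ _ _
      _ ≤ Submodule.map N.mkQ (jacSmul S M) := by
          apply sup_le _ le_rfl
          rintro - ⟨n, hn, rfl⟩
          simp [(Submodule.Quotient.mk_eq_zero N).mpr hn]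
  have := nak_top (S := S) (M := M ⧸ N) htop
  rw [eq_top_iff]
  intro m _
  have : N.mkQ m = 0 := this _
  rwa [Submodule.mkQ_apply, Submodule.Quotient.mk_eq_zero] at this

end helpers

/-- If `P` is finitely generated projective, `Q` is projective, and
`Q/QJ(S) ≅ X ⊕ P/PJ(S)` for some module `X` annihilated by `J(S)`, then there is a
projective module `Q'` with `Q'/Q'J(S) ≅ X` and `Q ≅ Q' ⊕ P`. -/
theorem stmt19 (S : Type u) [Ring S]
    (P : Type u) [AddCommGroup P] [Module S P] [Module.Finite S P] [Module.Projective S P]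
    (Q : Type u) [AddCommGroup Q] [Module S Q] [Module.Projective S Q]
    (X : Type u) [AddCommGroup X] [Module S X]
    (hX : ∀ j ∈ (⊥ : Ideal S).jacobson, ∀ x : X, j • x = 0)
    (h : Nonempty ((Q ⧸ jacSmul S Q) ≃ₗ[S] (X × (P ⧸ jacSmul S P)))) :
    ∃ Q' : Submodule S Q, Module.Projective S ↥Q' ∧
      Nonempty ((↥Q' ⧸ jacSmul S ↥Q') ≃ₗ[S] X) ∧
      Nonempty (Q ≃ₗ[S] (↥Q' × P)) := by
  obtain ⟨φ⟩ := h
  -- the composite Q → Q/QJ → P/PJ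
  let f : Q →ₗ[S] (P ⧸ jacSmul S P) :=
    (LinearMap.snd S X (P ⧸ jacSmul S P)).comp
      ((φ : (Q ⧸ jacSmul S Q) →ₗ[S] (X × (P ⧸ jacSmul S P))).comp (jacSmul S Q).mkQ)
  have hfs : Function.Surjective f :=
    Prod.snd_surjective.comp (φ.surjective.comp (jacSmul S Q).mkQ_surjective)
  -- lift to g : Q → P
  obtain ⟨g, hg⟩ := Module.projective_lifting_property (jacSmul S P).mkQ f
    (jacSmul S P).mkQ_surjective
  have hgf : ∀ q, (jacSmul S P).mkQ (g q) = f q := fun q => DFunLike.congr_fun hg q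
  -- g is surjective by Nakayama
  have hrange : LinearMap.range g = ⊤ := by
    apply nakayama
    rw [eq_top_iff]
    intro p _
    obtain ⟨q, hq⟩ := hfs ((jacSmul S P).mkQ p)
    have hmem : p - g q ∈ jacSmul S P := by
      rw [← Submodule.Quotient.mk_eq_zero, ← Submodule.mkQ_apply, map_sub, hgf, hq, sub_self]
    have : p = g q + (p - g q) := by abel
    rw [this]
    exact Submodule.add_mem_sup (LinearMap.mem_range_self g q) hmem
  have hgsurj : Function.Surjective g := LinearMap.range_eq_top.mp hrange
  -- split g
  obtain ⟨s, hs⟩ := Module.projective_lifting_property g (LinearMap.id) hgsurj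
  have hgs : ∀ p, g (s p) = p := fun p => DFunLike.congr_fun hs p
  set Q' := LinearMap.ker g with hQ'
  -- the projection onto Q'
  have hker : ∀ q : Q, q - s (g q) ∈ Q' := fun q => by
    simp [hQ', LinearMap.mem_ker, map_sub, hgs]
  let π : Q →ₗ[S] ↥Q' := LinearMap.codRestrict Q' (LinearMap.id - s.comp g) hker
  have hπ : ∀ q : Q, (π q : Q) = q - s (g q) := fun q => rfl
  have hπker : ∀ k : ↥Q', π (k : Q) = k := fun k => by
    apply Subtype.ext
    rw [hπ, LinearMap.mem_ker.mp k.2, map_zero, sub_zero]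
  -- projectivity of Q'
  have hproj : Module.Projective S ↥Q' :=
    Module.Projective.of_split Q'.subtype π (LinearMap.ext fun k => hπker k)
  -- the equivalence Q ≃ Q' × P
  let inv : (↥Q' × P) →ₗ[S] Q :=
    Q'.subtype.comp (LinearMap.fst S ↥Q' P) + s.comp (LinearMap.snd S ↥Q' P)
  have h1 : inv.comp (LinearMap.prod π g) = LinearMap.id := by
    apply LinearMap.ext
    intro q
    show (π q : Q) + s (g q) = q
    rw [hπ]
    abel
  have h2 : (LinearMap.prod π g).comp inv = LinearMap.id := by
    apply LinearMap.ext
    rintro ⟨k, p⟩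
    have hko : g (k : Q) = 0 := LinearMap.mem_ker.mp k.2
    have hinv : inv (k, p) = (k : Q) + s p := rfl
    show (π ((k : Q) + s p), g ((k : Q) + s p)) = (k, p)
    have hgp : g ((k : Q) + s p) = p := by rw [map_add, hko, hgs, zero_add]
    refine Prod.ext ?_ hgp
    apply Subtype.ext
    rw [hπ, hgp, add_sub_cancel_right]
  let e : Q ≃ₗ[S] (↥Q' × P) := LinearEquiv.ofLinear (LinearMap.prod π g) inv h2 h1
  -- the map Q' → X
  let β : ↥Q' →ₗ[S] X :=
    (LinearMap.fst S X (P ⧸ jacSmul S P)).comp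
      ((φ : (Q ⧸ jacSmul S Q) →ₗ[S] (X × (P ⧸ jacSmul S P))).comp
        ((jacSmul S Q).mkQ.comp Q'.subtype))
  have hβ : jacSmul S ↥Q' ≤ LinearMap.ker β := by
    rw [jacSmul, Submodule.span_le]
    rintro - ⟨j, hj, k, rfl⟩
    rw [SetLike.mem_coe, LinearMap.mem_ker, map_smul]
    exact hX j hj _
  let βbar := (jacSmul S ↥Q').liftQ β hβ
  -- each q with mkQ q killed by f-part lands correctly
  have hsjac : ∀ p ∈ jacSmul S P, (jacSmul S Q).mkQ (s p) = 0 := by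
    intro p hp
    rw [Submodule.mkQ_apply, Submodule.Quotient.mk_eq_zero]
    exact jacSmul_map_le s ⟨p, hp, rfl⟩
  have hβsurj : Function.Surjective βbar := by
    intro x
    obtain ⟨qb, hqb⟩ := φ.surjective (x, 0)
    obtain ⟨q, rfl⟩ := (jacSmul S Q).mkQ_surjective qb
    have hgq : g q ∈ jacSmul S P := by
      have : f q = 0 := by
        show (φ ((jacSmul S Q).mkQ q)).2 = 0
        rw [hqb]
      rw [← Submodule.Quotient.mk_eq_zero, ← Submodule.mkQ_apply, hgf, this]
    refine ⟨Submodule.Quotient.mk (π q), ?_⟩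
    have : βbar (Submodule.Quotient.mk (π q)) = β (π q) := Submodule.liftQ_apply _ _ _
    rw [this]
    show (φ ((jacSmul S Q).mkQ ((π q : Q)))).1 = x
    rw [hπ, map_sub, hsjac _ hgq, sub_zero]
    show (φ ((jacSmul S Q).mkQ q)).1 = x
    rw [hqb]
  have hβinj : Function.Injective βbar := by
    rw [← LinearMap.ker_eq_bot]
    apply LinearMap.ker_eq_bot'.mpr
    intro a ha
    obtain ⟨k, rfl⟩ := (jacSmul S ↥Q').mkQ_surjective a
    rw [Submodule.mkQ_apply, Submodule.Quotient.mk_eq_zero]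
    rw [Submodule.mkQ_apply, Submodule.liftQ_apply] at ha
    -- φ (mkQ k) = 0
    have h2comp : (φ ((jacSmul S Q).mkQ (k : Q))).2 = 0 := by
      show f (k : Q) = 0
      rw [← hgf, LinearMap.mem_ker.mp k.2, map_zero]
    have hφ0 : φ ((jacSmul S Q).mkQ (k : Q)) = 0 := by
      have h1comp : (φ ((jacSmul S Q).mkQ (k : Q))).1 = 0 := ha
      exact Prod.ext h1comp h2comp
    have hk : (k : Q) ∈ jacSmul S Q := by
      have h0 : (jacSmul S Q).mkQ (k : Q) = 0 := by
        apply φ.injective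
        rw [hφ0, map_zero]
      rwa [Submodule.mkQ_apply, Submodule.Quotient.mk_eq_zero] at h0
    have hmem := jacSmul_map_le π ⟨(k : Q), hk, rfl⟩
    rwa [hπker k] at hmem
  exact ⟨Q', hproj, ⟨(LinearEquiv.ofBijective βbar ⟨hβinj, hβsurj⟩)⟩, ⟨e⟩⟩
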